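/- Let P₁ = (1−p)·N(μ₁, σ₁²) + p·N(μ₁, σ₂²) and P₂ = (1−p)·N(μ₂, σ₁²) + p·N(μ₂, σ₂²) be two-component Gaussian mixtures on ℝ with 0 < σ₂ ≤ σ₁ and 0 < p ≤ 1/2. Then the Kullback–Leibler divergence satisfies KL(P₁‖P₂) ≤ (μ₁−μ₂)²/(2σ₁²) + E_{x∼P₁}[y(x)] − E_{x∼P₁}[z(x)] + E_{x∼P₁}[z(x)²], where y(x) = (p/(1−p))(σ₁/σ₂) exp(−(x−μ₁)²/(2σ₂²) + (x−μ₁)²/(2σ₁²)) and z(x) is defined analogously with μ₂. In particular, the elementary inequality log((1+y)/(1+z)) ≤ y − z + z² for y, z > 0 holds. -/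

import Mathlib

open MeasureTheory

lemma gaussAux_integrable (m s : ℝ) (hs : 0 < s) :
    Integrable (fun t : ℝ => Real.exp (-(t - m)^2/(2*s^2))) := by
  have hb : 0 < 1/(2*s^2) := by positivity
  have h := (integrable_exp_neg_mul_sq hb).comp_sub_right m
  have e : (fun t : ℝ => Real.exp (-(t - m)^2/(2*s^2)))
      = fun t : ℝ => Real.exp (-(1/(2*s^2)) * (t-m)^2) := by
    ext t; congr 1; ring
  rw [e]; exact h

lemma gaussAux_mul_integrable (m s : ℝ) (hs : 0 < s) :
    Integrable (fun t : ℝ => t * Real.exp (-(t - m)^2/(2*s^2))) := by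
  have hb : 0 < 1/(2*s^2) := by positivity
  have h1 := (integrable_mul_exp_neg_mul_sq hb).comp_sub_right m
  have h2 := ((integrable_exp_neg_mul_sq hb).comp_sub_right m).const_mul m
  have h := h1.add h2
  have e : (fun t : ℝ => t * Real.exp (-(t - m)^2/(2*s^2)))
      = (fun t : ℝ => (t - m) * Real.exp (-(1/(2*s^2)) * (t-m)^2))
        + fun t : ℝ => m * Real.exp (-(1/(2*s^2)) * (t-m)^2) := by
    ext t
    simp only [Pi.add_apply]
    have e2 : -(1/(2*s^2)) * (t - m)^2 = -(t - m)^2/(2*s^2) := by ring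
    rw [e2]; ring
  rw [e]; exact h

lemma gaussAux_integral (m s : ℝ) (hs : 0 < s) :
    (∫ t : ℝ, Real.exp (-(t - m)^2/(2*s^2))) = s * Real.sqrt (2*Real.pi) := by
  have hb : 0 < 1/(2*s^2) := by positivity
  have h1 : (∫ t : ℝ, Real.exp (-(t - m)^2/(2*s^2)))
      = ∫ t : ℝ, Real.exp (-(1/(2*s^2)) * t^2) := by
    rw [← integral_sub_right_eq_self (fun t => Real.exp (-(1/(2*s^2)) * t^2)) m]
    congr 1; ext t; congr 1; ring
  rw [h1, integral_gaussian]
  rw [show Real.pi / (1/(2*s^2)) = s^2 * (2*Real.pi) by field_simp]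
  rw [Real.sqrt_mul (sq_nonneg s), Real.sqrt_sq hs.le]

lemma gaussAux_mul_integral (m s : ℝ) (hs : 0 < s) :
    (∫ t : ℝ, t * Real.exp (-(t - m)^2/(2*s^2))) = m * (s * Real.sqrt (2*Real.pi)) := by
  have hb : 0 < 1/(2*s^2) := by positivity
  have hodd : (∫ t : ℝ, t * Real.exp (-(1/(2*s^2)) * t^2)) = 0 := by
    have h := integral_neg_eq_self (fun t : ℝ => t * Real.exp (-(1/(2*s^2)) * t^2)) volume
    simp only [neg_sq, neg_mul] at h
    rw [integral_neg] at h
    simp only [neg_mul]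
    linarith
  have h1 : (∫ t : ℝ, t * Real.exp (-(t - m)^2/(2*s^2)))
      = ∫ t : ℝ, (t + m) * Real.exp (-(1/(2*s^2)) * t^2) := by
    rw [← integral_sub_right_eq_self (fun t => (t + m) * Real.exp (-(1/(2*s^2)) * t^2)) m]
    congr 1; ext t
    have e : -(1/(2*s^2)) * (t - m)^2 = -(t - m)^2/(2*s^2) := by ring
    rw [e]; ring_nf
  rw [h1]
  have hint : (∫ t : ℝ, (t + m) * Real.exp (-(1/(2*s^2)) * t^2))
      = (∫ t : ℝ, t * Real.exp (-(1/(2*s^2)) * t^2))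
        + m * ∫ t : ℝ, Real.exp (-(1/(2*s^2)) * t^2) := by
    rw [← integral_const_mul, ← integral_add (integrable_mul_exp_neg_mul_sq hb)
      ((integrable_exp_neg_mul_sq hb).const_mul m)]
    congr 1; ext t; ring
  rw [hint, hodd, zero_add]
  have h2 : (∫ t : ℝ, Real.exp (-(1/(2*s^2)) * t^2)) = s * Real.sqrt (2*Real.pi) := by
    have h3 := gaussAux_integral 0 s hs
    rw [← h3]; congr 1; ext t; congr 1; ring
  rw [h2]

lemma elemLogDiff (y z : ℝ) (hy : 0 < y) (hz : 0 < z) :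
    Real.log (1 + y) - Real.log (1 + z) ≤ y - z + z ^ 2 := by
  have h1y : (0:ℝ) < 1 + y := by linarith
  have h1z : (0:ℝ) < 1 + z := by linarith
  have h1 : Real.log (1 + y) ≤ y := by
    have := Real.log_le_sub_one_of_pos h1y; linarith
  have h2 : Real.log ((1 + z)⁻¹) ≤ (1 + z)⁻¹ - 1 :=
    Real.log_le_sub_one_of_pos (by positivity)
  rw [Real.log_inv] at h2
  have h4 : (1 + z) * (1 + z)⁻¹ = 1 := mul_inv_cancel₀ (ne_of_gt h1z)
  nlinarith [h1, h2, h4, hz.le, sq_nonneg z]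

/-- KL bound for two-component Gaussian mixtures with common variances
`σ₁² ≥ σ₂²` and mixture weight `p ≤ 1/2`:
`KL(P₁‖P₂) ≤ (μ₁-μ₂)²/(2σ₁²) + E₁[y] − E₁[z] + E₁[z²]`, together with the
elementary inequality `log((1+y)/(1+z)) ≤ y − z + z²` for `y, z > 0`. -/
theorem gaussian_mixture_kl_bound
    (p σ₁ σ₂ μ₁ μ₂ : ℝ) (hp : 0 < p) (hp2 : p ≤ 1 / 2)
    (hσ₂ : 0 < σ₂) (hσ : σ₂ ≤ σ₁)
    (gpdf : ℝ → ℝ → ℝ → ℝ)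
    (hgpdf : ∀ m s t, gpdf m s t
      = Real.exp (-(t - m) ^ 2 / (2 * s ^ 2)) / (s * Real.sqrt (2 * Real.pi)))
    (q₁ q₂ yy zz : ℝ → ℝ)
    (hq₁ : ∀ t, q₁ t = (1 - p) * gpdf μ₁ σ₁ t + p * gpdf μ₁ σ₂ t)
    (hq₂ : ∀ t, q₂ t = (1 - p) * gpdf μ₂ σ₁ t + p * gpdf μ₂ σ₂ t)
    (hyy : ∀ t, yy t = (p / (1 - p)) * (σ₁ / σ₂) *
      Real.exp (-(t - μ₁) ^ 2 / (2 * σ₂ ^ 2) + (t - μ₁) ^ 2 / (2 * σ₁ ^ 2)))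
    (hzz : ∀ t, zz t = (p / (1 - p)) * (σ₁ / σ₂) *
      Real.exp (-(t - μ₂) ^ 2 / (2 * σ₂ ^ 2) + (t - μ₂) ^ 2 / (2 * σ₁ ^ 2))) :
    (∫ t, q₁ t * Real.log (q₁ t / q₂ t)) ≤
        (μ₁ - μ₂) ^ 2 / (2 * σ₁ ^ 2)
        + (∫ t, q₁ t * yy t) - (∫ t, q₁ t * zz t) + (∫ t, q₁ t * zz t ^ 2) ∧
    (∀ y z : ℝ, 0 < y → 0 < z →
      Real.log ((1 + y) / (1 + z)) ≤ y - z + z ^ 2) := by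
  have hσ₁ : 0 < σ₁ := lt_of_lt_of_le hσ₂ hσ
  have h1p : 0 < 1 - p := by linarith
  have hK : 0 < Real.sqrt (2 * Real.pi) := Real.sqrt_pos.mpr (by positivity)
  constructor
  swap
  · intro y z hy hz
    rw [Real.log_div (by positivity) (by positivity)]
    exact elemLogDiff y z hy hz
  -- the constant c
  set c : ℝ := p / (1 - p) * (σ₁ / σ₂) with hcdef
  have hc : 0 < c := by positivity
  -- pointwise bounds on yy, zz
  have hexple : ∀ m t : ℝ,
      Real.exp (-(t - m) ^ 2 / (2 * σ₂ ^ 2) + (t - m) ^ 2 / (2 * σ₁ ^ 2)) ≤ 1 := by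
    intro m t
    rw [Real.exp_le_one_iff]
    have hle : (t - m) ^ 2 / (2 * σ₁ ^ 2) ≤ (t - m) ^ 2 / (2 * σ₂ ^ 2) := by
      gcongr
    have e : -(t - m) ^ 2 / (2 * σ₂ ^ 2) = -((t - m) ^ 2 / (2 * σ₂ ^ 2)) := by ring
    rw [e]
    linarith
  have hyypos : ∀ t, 0 < yy t := fun t => by rw [hyy]; positivity
  have hzzpos : ∀ t, 0 < zz t := fun t => by rw [hzz]; positivity
  have hyyle : ∀ t, yy t ≤ c := by
    intro t
    rw [hyy]
    calc p / (1 - p) * (σ₁ / σ₂) * Real.exp (-(t - μ₁) ^ 2 / (2 * σ₂ ^ 2)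
          + (t - μ₁) ^ 2 / (2 * σ₁ ^ 2))
        ≤ p / (1 - p) * (σ₁ / σ₂) * 1 :=
          mul_le_mul_of_nonneg_left (hexple μ₁ t) hc.le
      _ = c := by rw [mul_one]
  have hzzle : ∀ t, zz t ≤ c := by
    intro t
    rw [hzz]
    calc p / (1 - p) * (σ₁ / σ₂) * Real.exp (-(t - μ₂) ^ 2 / (2 * σ₂ ^ 2)
          + (t - μ₂) ^ 2 / (2 * σ₁ ^ 2))
        ≤ p / (1 - p) * (σ₁ / σ₂) * 1 :=
          mul_le_mul_of_nonneg_left (hexple μ₂ t) hc.le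
      _ = c := by rw [mul_one]
  -- positivity of pdfs and mixtures
  have hgpos : ∀ m s t : ℝ, 0 < s → 0 < gpdf m s t := by
    intro m s t hs; rw [hgpdf]; positivity
  have hq1pos : ∀ t, 0 < q₁ t := by
    intro t; rw [hq₁]
    exact add_pos (mul_pos h1p (hgpos μ₁ σ₁ t hσ₁)) (mul_pos hp (hgpos μ₁ σ₂ t hσ₂))
  have hq2pos : ∀ t, 0 < q₂ t := by
    intro t; rw [hq₂]
    exact add_pos (mul_pos h1p (hgpos μ₂ σ₁ t hσ₁)) (mul_pos hp (hgpos μ₂ σ₂ t hσ₂))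
  -- product decomposition
  have key : ∀ m (f : ℝ → ℝ), (∀ t, f t = c * Real.exp (-(t - m) ^ 2 / (2 * σ₂ ^ 2)
        + (t - m) ^ 2 / (2 * σ₁ ^ 2))) →
      ∀ t, (1 - p) * gpdf m σ₁ t * f t = p * gpdf m σ₂ t := by
    intro m f hf t
    rw [hf, hgpdf, hgpdf, hcdef]
    have e : Real.exp (-(t - m) ^ 2 / (2 * σ₁ ^ 2))
        * Real.exp (-(t - m) ^ 2 / (2 * σ₂ ^ 2) + (t - m) ^ 2 / (2 * σ₁ ^ 2))
        = Real.exp (-(t - m) ^ 2 / (2 * σ₂ ^ 2)) := by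
      rw [← Real.exp_add]; ring_nf
    rw [← e]
    field_simp
  have hA1 : ∀ t, q₁ t = (1 - p) * gpdf μ₁ σ₁ t * (1 + yy t) := by
    intro t
    have k := key μ₁ yy (fun t => by rw [hyy, hcdef]) t
    rw [hq₁]
    linear_combination -k
  have hA2 : ∀ t, q₂ t = (1 - p) * gpdf μ₂ σ₁ t * (1 + zz t) := by
    intro t
    have k := key μ₂ zz (fun t => by rw [hzz, hcdef]) t
    rw [hq₂]
    linear_combination -k
  -- log pdf
  have lg : ∀ m t : ℝ, Real.log (gpdf m σ₁ t)
      = -(t - m) ^ 2 / (2 * σ₁ ^ 2) - Real.log (σ₁ * Real.sqrt (2 * Real.pi)) := by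
    intro m t
    rw [hgpdf, Real.log_div (Real.exp_ne_zero _) (by positivity), Real.log_exp]
  -- decomposition of the log-likelihood ratio
  have hlog : ∀ t, Real.log (q₁ t / q₂ t)
      = ((t - μ₂) ^ 2 - (t - μ₁) ^ 2) / (2 * σ₁ ^ 2)
        + (Real.log (1 + yy t) - Real.log (1 + zz t)) := by
    intro t
    have g1 := hgpos μ₁ σ₁ t hσ₁
    have g2 := hgpos μ₂ σ₁ t hσ₁
    have y1 : (0:ℝ) < 1 + yy t := by linarith [hyypos t]
    have z1 : (0:ℝ) < 1 + zz t := by linarith [hzzpos t]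
    rw [hA1 t, hA2 t,
      Real.log_div (ne_of_gt (mul_pos (mul_pos h1p g1) y1))
        (ne_of_gt (mul_pos (mul_pos h1p g2) z1)),
      Real.log_mul (ne_of_gt (mul_pos h1p g1)) (ne_of_gt y1),
      Real.log_mul (ne_of_gt (mul_pos h1p g2)) (ne_of_gt z1),
      Real.log_mul (ne_of_gt h1p) (ne_of_gt g1),
      Real.log_mul (ne_of_gt h1p) (ne_of_gt g2),
      lg μ₁ t, lg μ₂ t]
    ring
  have hfun : (fun t => q₁ t * Real.log (q₁ t / q₂ t))
      = fun t => q₁ t * (((t - μ₂) ^ 2 - (t - μ₁) ^ 2) / (2 * σ₁ ^ 2))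
        + q₁ t * (Real.log (1 + yy t) - Real.log (1 + zz t)) := by
    funext t; rw [hlog t]; ring
  -- explicit form of q₁
  have q1e : q₁ = fun t => (1 - p) / (σ₁ * Real.sqrt (2 * Real.pi))
        * Real.exp (-(t - μ₁) ^ 2 / (2 * σ₁ ^ 2))
      + p / (σ₂ * Real.sqrt (2 * Real.pi)) * Real.exp (-(t - μ₁) ^ 2 / (2 * σ₂ ^ 2)) := by
    funext t; rw [hq₁, hgpdf, hgpdf]; ring
  -- continuity
  have hq₁c : Continuous q₁ := by
    rw [q1e]; fun_prop
  have hyyc : Continuous yy := by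
    have e : yy = fun t => c * Real.exp (-(t - μ₁) ^ 2 / (2 * σ₂ ^ 2)
        + (t - μ₁) ^ 2 / (2 * σ₁ ^ 2)) := funext fun t => by rw [hyy, hcdef]
    rw [e]; fun_prop
  have hzzc : Continuous zz := by
    have e : zz = fun t => c * Real.exp (-(t - μ₂) ^ 2 / (2 * σ₂ ^ 2)
        + (t - μ₂) ^ 2 / (2 * σ₁ ^ 2)) := funext fun t => by rw [hzz, hcdef]
    rw [e]; fun_prop
  -- integrability
  have iq₁ : Integrable q₁ := by
    rw [q1e]
    exact ((gaussAux_integrable μ₁ σ₁ hσ₁).const_mul _).add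
      ((gaussAux_integrable μ₁ σ₂ hσ₂).const_mul _)
  have iq₁t : Integrable (fun t => t * q₁ t) := by
    have e : (fun t => t * q₁ t)
        = fun t => (1 - p) / (σ₁ * Real.sqrt (2 * Real.pi))
            * (t * Real.exp (-(t - μ₁) ^ 2 / (2 * σ₁ ^ 2)))
          + p / (σ₂ * Real.sqrt (2 * Real.pi))
            * (t * Real.exp (-(t - μ₁) ^ 2 / (2 * σ₂ ^ 2))) := by
      funext t; rw [hq₁, hgpdf, hgpdf]; ring
    rw [e]
    exact ((gaussAux_mul_integrable μ₁ σ₁ hσ₁).const_mul _).add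
      ((gaussAux_mul_integrable μ₁ σ₂ hσ₂).const_mul _)
  have hbound : ∀ (f : ℝ → ℝ) (M : ℝ), Continuous f → (∀ t, |f t| ≤ M) →
      Integrable (fun t => q₁ t * f t) := by
    intro f M hf hM
    refine Integrable.mono' (iq₁.const_mul M) ((hq₁c.mul hf).aestronglyMeasurable)
      (ae_of_all _ fun t => ?_)
    have h0 := (hq1pos t).le
    rw [Real.norm_eq_abs, abs_mul, abs_of_nonneg h0]
    calc q₁ t * |f t| ≤ q₁ t * M := mul_le_mul_of_nonneg_left (hM t) h0
      _ = M * q₁ t := mul_comm _ _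
  have iyy : Integrable (fun t => q₁ t * yy t) :=
    hbound yy c hyyc fun t => by rw [abs_of_pos (hyypos t)]; exact hyyle t
  have izz : Integrable (fun t => q₁ t * zz t) :=
    hbound zz c hzzc fun t => by rw [abs_of_pos (hzzpos t)]; exact hzzle t
  have izz2 : Integrable (fun t => q₁ t * zz t ^ 2) :=
    hbound (fun t => zz t ^ 2) (c ^ 2) (hzzc.pow 2) fun t => by
      rw [abs_of_pos (pow_pos (hzzpos t) 2)]
      exact pow_le_pow_left₀ (hzzpos t).le (hzzle t) 2
  have ilog : Integrable (fun t => q₁ t * (Real.log (1 + yy t) - Real.log (1 + zz t))) := by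
    refine hbound _ (Real.log (1 + c))
      (((continuous_const.add hyyc).log fun t => ne_of_gt (by show (0:ℝ) < 1 + yy t; linarith [hyypos t])).sub
        ((continuous_const.add hzzc).log fun t => ne_of_gt (by show (0:ℝ) < 1 + zz t; linarith [hzzpos t]))) fun t => ?_
    have hy1 : (0:ℝ) < 1 + yy t := by linarith [hyypos t]
    have hz1 : (0:ℝ) < 1 + zz t := by linarith [hzzpos t]
    have la0 : 0 ≤ Real.log (1 + yy t) := Real.log_nonneg (by linarith [hyypos t])
    have lb0 : 0 ≤ Real.log (1 + zz t) := Real.log_nonneg (by linarith [hzzpos t])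
    have lac : Real.log (1 + yy t) ≤ Real.log (1 + c) :=
      Real.log_le_log hy1 (by linarith [hyyle t])
    have lbc : Real.log (1 + zz t) ≤ Real.log (1 + c) :=
      Real.log_le_log hz1 (by linarith [hzzle t])
    rw [abs_sub_le_iff]
    constructor <;> linarith
  have hQlin : ∀ t : ℝ, ((t - μ₂) ^ 2 - (t - μ₁) ^ 2) / (2 * σ₁ ^ 2)
      = (μ₁ - μ₂) / σ₁ ^ 2 * t + (μ₂ ^ 2 - μ₁ ^ 2) / (2 * σ₁ ^ 2) := by
    intro t; field_simp; ring
  have eA : (fun t => q₁ t * (((t - μ₂) ^ 2 - (t - μ₁) ^ 2) / (2 * σ₁ ^ 2)))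
      = fun t => (μ₁ - μ₂) / σ₁ ^ 2 * (t * q₁ t)
        + (μ₂ ^ 2 - μ₁ ^ 2) / (2 * σ₁ ^ 2) * q₁ t := by
    funext t; rw [hQlin t]; ring
  have iA : Integrable (fun t => q₁ t * (((t - μ₂) ^ 2 - (t - μ₁) ^ 2) / (2 * σ₁ ^ 2))) := by
    rw [eA]
    exact (iq₁t.const_mul _).add (iq₁.const_mul _)
  -- gaussian integrals
  have Iq₁ : (∫ t, q₁ t) = 1 := by
    rw [q1e, integral_add ((gaussAux_integrable μ₁ σ₁ hσ₁).const_mul _)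
      ((gaussAux_integrable μ₁ σ₂ hσ₂).const_mul _),
      integral_const_mul, integral_const_mul,
      gaussAux_integral μ₁ σ₁ hσ₁, gaussAux_integral μ₁ σ₂ hσ₂]
    field_simp
    ring
  have Iq₁t : (∫ t, t * q₁ t) = μ₁ := by
    have e : (fun t => t * q₁ t)
        = fun t => (1 - p) / (σ₁ * Real.sqrt (2 * Real.pi))
            * (t * Real.exp (-(t - μ₁) ^ 2 / (2 * σ₁ ^ 2)))
          + p / (σ₂ * Real.sqrt (2 * Real.pi))
            * (t * Real.exp (-(t - μ₁) ^ 2 / (2 * σ₂ ^ 2))) := by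
      funext t; rw [hq₁, hgpdf, hgpdf]; ring
    rw [e, integral_add ((gaussAux_mul_integrable μ₁ σ₁ hσ₁).const_mul _)
      ((gaussAux_mul_integrable μ₁ σ₂ hσ₂).const_mul _),
      integral_const_mul, integral_const_mul,
      gaussAux_mul_integral μ₁ σ₁ hσ₁, gaussAux_mul_integral μ₁ σ₂ hσ₂]
    field_simp
    ring
  have IA : (∫ t, q₁ t * (((t - μ₂) ^ 2 - (t - μ₁) ^ 2) / (2 * σ₁ ^ 2)))
      = (μ₁ - μ₂) ^ 2 / (2 * σ₁ ^ 2) := by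
    rw [eA, integral_add (iq₁t.const_mul _) (iq₁.const_mul _),
      integral_const_mul, integral_const_mul, Iq₁t, Iq₁]
    field_simp
    ring
  -- pointwise bound for the log-ratio part
  have hptwise : ∀ t, q₁ t * (Real.log (1 + yy t) - Real.log (1 + zz t))
      ≤ q₁ t * yy t - q₁ t * zz t + q₁ t * zz t ^ 2 := by
    intro t
    have h := mul_le_mul_of_nonneg_left
      (elemLogDiff (yy t) (zz t) (hyypos t) (hzzpos t)) (hq1pos t).le
    have e2 : q₁ t * (yy t - zz t + zz t ^ 2)
        = q₁ t * yy t - q₁ t * zz t + q₁ t * zz t ^ 2 := by ring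
    linarith [h, e2.le, e2.ge]
  have isub : Integrable (fun t => q₁ t * yy t - q₁ t * zz t) := iyy.sub izz
  have iRHS : Integrable (fun t => q₁ t * yy t - q₁ t * zz t + q₁ t * zz t ^ 2) :=
    isub.add izz2
  calc (∫ t, q₁ t * Real.log (q₁ t / q₂ t))
      = (∫ t, q₁ t * (((t - μ₂) ^ 2 - (t - μ₁) ^ 2) / (2 * σ₁ ^ 2)))
        + ∫ t, q₁ t * (Real.log (1 + yy t) - Real.log (1 + zz t)) := by
        rw [hfun, integral_add iA ilog]
    _ ≤ (μ₁ - μ₂) ^ 2 / (2 * σ₁ ^ 2)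
        + ∫ t, (q₁ t * yy t - q₁ t * zz t + q₁ t * zz t ^ 2) := by
        rw [IA]
        exact add_le_add le_rfl (integral_mono ilog iRHS hptwise)
    _ = (μ₁ - μ₂) ^ 2 / (2 * σ₁ ^ 2)
        + (∫ t, q₁ t * yy t) - (∫ t, q₁ t * zz t) + (∫ t, q₁ t * zz t ^ 2) := by
        rw [integral_add isub izz2, integral_sub iyy izz]
        ring
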